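/- Let F be a cumulative distribution function on ℝ with mean μ whose support is contained in a bounded interval [a,b] with a < b. Then there exist random variables X_i, i ∈ ℕ, each with distribution F, such that for every n ∈ ℕ, |S_n − nμ| ≤ b − a almost surely, where S_n = X₁ + ⋯ + X_n. -/

import Mathlib

open MeasureTheory ProbabilityTheory Set Filter Topology Asymptotics

noncomputable section

/-- Generalized inverse `F⁻¹` of the CDF of the distribution `ν`:
`F⁻¹(t) = inf {x | F(x) ≥ t}` for `t ≠ 0` and `F⁻¹(0) = inf {x | F(x) > 0}`. -/
def qf (ν : Measure ℝ) (t : ℝ) : ℝ :=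
  if t = 0 then sInf {x : ℝ | 0 < (ν (Iic x)).toReal}
  else sInf {x : ℝ | t ≤ (ν (Iic x)).toReal}

/-- `H(s) = ∫₀ˢ (F⁻¹(t) − μ) dt`. -/
def Hfun (ν : Measure ℝ) (μ : ℝ) (s : ℝ) : ℝ := ∫ t in (0:ℝ)..s, (qf ν t - μ)

/-- `ν = F(μ−)`. -/
def nuM (ν : Measure ℝ) (μ : ℝ) : ℝ := (ν (Iio μ)).toReal

/-- `ν⁺ = F(μ)`. -/
def nuP (ν : Measure ℝ) (μ : ℝ) : ℝ := (ν (Iic μ)).toReal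

/-- `c = H(ν)`, the minimum value of `H`. -/
def cval (ν : Measure ℝ) (μ : ℝ) : ℝ := Hfun ν μ (nuM ν μ)

/-- `A : [c,0] → [0,ν]`, the inverse of `H` on `[0,ν)`, with `A(c) = ν⁺`. -/
def Afun (ν : Measure ℝ) (μ : ℝ) (s : ℝ) : ℝ :=
  if s = cval ν μ then nuP ν μ
  else sInf {t : ℝ | t ∈ Icc 0 (nuM ν μ) ∧ Hfun ν μ t ≤ s}

/-- `B : [c,0] → [ν⁺,1]`, the inverse of `H` on `(ν⁺,1]`, with `B(c) = ν⁺`. -/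
def Bfun (ν : Measure ℝ) (μ : ℝ) (s : ℝ) : ℝ :=
  if s = cval ν μ then nuP ν μ
  else sInf {t : ℝ | t ∈ Icc (nuP ν μ) 1 ∧ s ≤ Hfun ν μ t}

/-- The distribution function `K`, supported on `[c,0]`. -/
def Kfun (ν : Measure ℝ) (μ : ℝ) (s : ℝ) : ℝ :=
  if 0 < s then 1
  else if s < cval ν μ then 0
  else if s = cval ν μ then nuP ν μ - nuM ν μ
  else Bfun ν μ s - Afun ν μ s

/-- `u(s) = (μ − F⁻¹(A(s))) / (F⁻¹(B(s)) − F⁻¹(A(s)))` for `s ∈ (c,0)`, `u(c) = 1/2`. -/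
def ufun (ν : Measure ℝ) (μ : ℝ) (s : ℝ) : ℝ :=
  if s = cval ν μ then 1/2
  else (μ - qf ν (Afun ν μ s)) / (qf ν (Bfun ν μ s) - qf ν (Afun ν μ s))

/-- Generalized inverse of the distribution function `K`. -/
def Kinv (ν : Measure ℝ) (μ : ℝ) (t : ℝ) : ℝ := sInf {s : ℝ | t ≤ Kfun ν μ s}

/-- The map `t ↦ F⁻¹(B(Y(t))) − F⁻¹(A(Y(t)))` where `Y = K⁻¹` is the quantile
transform of `K`; applied to a uniform random variable it realizes the residual
distribution of `F`. -/
def residualRV (ν : Measure ℝ) (μ : ℝ) (t : ℝ) : ℝ :=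
  qf ν (Bfun ν μ (Kinv ν μ t)) - qf ν (Afun ν μ (Kinv ν μ t))

/-- The residual distribution `F̃` of `F`: the law of `F⁻¹(B(Y)) − F⁻¹(A(Y))`
for `Y ∼ K`. -/
def residualDist (ν : Measure ℝ) (μ : ℝ) : Measure ℝ :=
  Measure.map (residualRV ν μ) (volume.restrict (Icc (0:ℝ) 1))

end

section auxiliaryLemmas

open scoped Classical

private lemma floorD_le (c q ω : ℝ) (h1 : q ≤ 1) : ⌊c + q + ω⌋ ≤ ⌊c + ω⌋ + 1 := by
  rw [← Int.floor_add_one]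
  exact Int.floor_le_floor (by linarith)

private lemma floorD_ge (c q ω : ℝ) (h0 : 0 ≤ q) : ⌊c + ω⌋ ≤ ⌊c + q + ω⌋ :=
  Int.floor_le_floor (by linarith)

private lemma floorD_iff (c q ω : ℝ) :
    ⌊c + ω⌋ + 1 ≤ ⌊c + q + ω⌋ ↔ 1 - q ≤ Int.fract (c + ω) := by
  rw [Int.le_floor, Int.fract]
  push_cast
  constructor <;> intro h <;> linarith

private lemma fract_set_volume (c q : ℝ) (h0 : 0 ≤ q) (h1 : q ≤ 1) :
    MeasureTheory.volume {ω : ℝ | ω ∈ Set.Ico (0:ℝ) 1 ∧ 1 - q ≤ Int.fract (c + ω)}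
      = ENNReal.ofReal q := by
  set r := Int.fract c with hr
  have hr0 : 0 ≤ r := Int.fract_nonneg c
  have hr1 : r < 1 := Int.fract_lt_one c
  have hfr : ∀ ω : ℝ, Int.fract (c + ω) = Int.fract (r + ω) := by
    intro ω
    conv_lhs => rw [show c + ω = (⌊c⌋ : ℝ) + (r + ω) by rw [hr, Int.fract]; ring]
    exact Int.fract_intCast_add _ _
  have hlow : ∀ ω : ℝ, 0 ≤ ω → ω < 1 - r → Int.fract (r + ω) = r + ω := by
    intro ω hω hω'; exact Int.fract_eq_self.2 ⟨by linarith, by linarith⟩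
  have hhigh : ∀ ω : ℝ, 1 - r ≤ ω → ω < 1 → Int.fract (r + ω) = r + ω - 1 := by
    intro ω hω hω'
    have : Int.fract (r + ω) = Int.fract (r + ω - (1:ℤ)) := (Int.fract_sub_intCast _ _).symm
    rw [this]
    push_cast
    exact Int.fract_eq_self.2 ⟨by linarith, by linarith⟩
  by_cases hcase : q + r ≤ 1
  · have hS : {ω : ℝ | ω ∈ Set.Ico (0:ℝ) 1 ∧ 1 - q ≤ Int.fract (c + ω)}
        = Set.Ico (1 - q - r) (1 - r) := by
      ext ω
      simp only [Set.mem_setOf_eq, Set.mem_Ico, hfr]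
      constructor
      · rintro ⟨⟨hω0, hω1⟩, hf⟩
        by_cases hlt : ω < 1 - r
        · rw [hlow ω hω0 hlt] at hf
          exact ⟨by linarith, hlt⟩
        · push_neg at hlt
          rw [hhigh ω hlt hω1] at hf
          exfalso; linarith
      · rintro ⟨hω0, hω1⟩
        have h0ω : 0 ≤ ω := le_trans (by linarith) hω0
        refine ⟨⟨h0ω, by linarith⟩, ?_⟩
        rw [hlow ω h0ω hω1]; linarith
    rw [hS, Real.volume_Ico]
    congr 1; ring
  · push_neg at hcase
    have hS : {ω : ℝ | ω ∈ Set.Ico (0:ℝ) 1 ∧ 1 - q ≤ Int.fract (c + ω)}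
        = Set.Ico 0 (1 - r) ∪ Set.Ico (2 - q - r) 1 := by
      ext ω
      simp only [Set.mem_setOf_eq, Set.mem_Ico, Set.mem_union, hfr]
      constructor
      · rintro ⟨⟨hω0, hω1⟩, hf⟩
        by_cases hlt : ω < 1 - r
        · exact Or.inl ⟨hω0, hlt⟩
        · push_neg at hlt
          rw [hhigh ω hlt hω1] at hf
          exact Or.inr ⟨by linarith, hω1⟩
      · rintro (⟨hω0, hω1⟩ | ⟨hω0, hω1⟩)
        · refine ⟨⟨hω0, by linarith⟩, ?_⟩
          rw [hlow ω hω0 hω1]; linarith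
        · have h1r : 1 - r ≤ ω := by linarith
          refine ⟨⟨by linarith, hω1⟩, ?_⟩
          rw [hhigh ω h1r hω1]; linarith
    rw [hS, measure_union _ measurableSet_Ico]
    · rw [Real.volume_Ico, Real.volume_Ico, ← ENNReal.ofReal_add (by linarith) (by linarith)]
      congr 1; ring
    · refine Set.disjoint_left.2 fun ω hω hω' => ?_
      rcases hω with ⟨_, h2⟩; rcases hω' with ⟨h3, _⟩
      linarith

private lemma lam_finite :
    MeasureTheory.IsFiniteMeasure (MeasureTheory.volume.restrict (Set.Ico (0:ℝ) 1)) := by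
  constructor
  rw [MeasureTheory.Measure.restrict_apply MeasurableSet.univ]
  simp [Real.volume_Ico]

end auxiliaryLemmas

section mainConstruction

open MeasureTheory Set
open scoped Classical

private lemma slice_eq (μ x y : ℝ) (i : ℕ) (B : Set ℝ) (hB : MeasurableSet B)
    (hxμ : x < μ) (hμy : μ < y) :
    (volume.restrict (Ico (0:ℝ) 1)) {ω : ℝ |
        x + (y - x) * (((⌊((i:ℝ)+1) * ((μ - x)/(y - x)) + ω⌋ : ℤ) : ℝ)
          - ((⌊(i:ℝ) * ((μ - x)/(y - x)) + ω⌋ : ℤ) : ℝ)) ∈ B}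
      = (if x ∈ B then ENNReal.ofReal (1 - (μ - x)/(y - x)) else 0)
        + (if y ∈ B then ENNReal.ofReal ((μ - x)/(y - x)) else 0) := by
  classical
  haveI := lam_finite
  have hyx : (0:ℝ) < y - x := by linarith
  set q : ℝ := (μ - x)/(y - x) with hqdef
  have hq0 : 0 < q := div_pos (by linarith) hyx
  have hq1 : q < 1 := (div_lt_one hyx).mpr (by linarith)
  set S1 : Set ℝ := {ω : ℝ | 1 - q ≤ Int.fract ((i:ℝ) * q + ω)} with hS1def
  have hS1m : MeasurableSet S1 :=
    measurableSet_le measurable_const (measurable_fract.comp (measurable_const.add measurable_id))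
  have hXval : ∀ ω : ℝ, x + (y - x) * (((⌊((i:ℝ)+1) * q + ω⌋ : ℤ) : ℝ)
      - ((⌊(i:ℝ) * q + ω⌋ : ℤ) : ℝ)) = if ω ∈ S1 then y else x := by
    intro ω
    have harg : ((i:ℝ)+1) * q + ω = (i:ℝ) * q + q + ω := by ring
    rw [harg]
    by_cases h : ω ∈ S1
    · have heq : ⌊(i:ℝ) * q + q + ω⌋ = ⌊(i:ℝ) * q + ω⌋ + 1 :=
        le_antisymm (floorD_le _ q ω hq1.le) ((floorD_iff _ q ω).mpr h)
      rw [if_pos h, heq]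
      push_cast; ring
    · have hlt : ¬ (⌊(i:ℝ) * q + ω⌋ + 1 ≤ ⌊(i:ℝ) * q + q + ω⌋) :=
        fun hc => h ((floorD_iff _ q ω).mp hc)
      have heq : ⌊(i:ℝ) * q + q + ω⌋ = ⌊(i:ℝ) * q + ω⌋ :=
        le_antisymm (by omega) (floorD_ge _ q ω hq0.le)
      rw [if_neg h, heq]
      ring
  have huniv : (volume.restrict (Ico (0:ℝ) 1)) univ = ENNReal.ofReal 1 := by
    rw [Measure.restrict_apply MeasurableSet.univ]
    simp [Real.volume_Ico]
  have hvol1 : (volume.restrict (Ico (0:ℝ) 1)) S1 = ENNReal.ofReal q := by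
    rw [Measure.restrict_apply hS1m]
    have hset : S1 ∩ Ico (0:ℝ) 1
        = {ω : ℝ | ω ∈ Ico (0:ℝ) 1 ∧ 1 - q ≤ Int.fract ((i:ℝ) * q + ω)} := by
      ext ω; simp only [hS1def, mem_inter_iff, mem_setOf_eq]; tauto
    rw [hset]
    exact fract_set_volume _ q hq0.le hq1.le
  have hvolc : (volume.restrict (Ico (0:ℝ) 1)) S1ᶜ = ENNReal.ofReal (1 - q) := by
    rw [measure_compl hS1m (measure_ne_top _ _), hvol1, huniv, ← ENNReal.ofReal_sub _ hq0.le]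
  have hsetX : {ω : ℝ | x + (y - x) * (((⌊((i:ℝ)+1) * q + ω⌋ : ℤ) : ℝ)
      - ((⌊(i:ℝ) * q + ω⌋ : ℤ) : ℝ)) ∈ B}
      = (if y ∈ B then S1 else ∅) ∪ (if x ∈ B then S1ᶜ else ∅) := by
    ext ω
    rw [mem_setOf_eq, hXval ω]
    by_cases h : ω ∈ S1 <;> by_cases hxB : x ∈ B <;> by_cases hyB : y ∈ B <;>
      simp [h, hxB, hyB]
  rw [hsetX]
  by_cases hxB : x ∈ B <;> by_cases hyB : y ∈ B
  · simp only [hxB, hyB, if_true, union_compl_self]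
    rw [huniv, ← ENNReal.ofReal_add (by linarith) hq0.le]
    congr 1; ring
  · simp only [hxB, hyB, if_true, if_false, empty_union]
    rw [hvolc, add_zero]
  · simp only [hxB, hyB, if_true, if_false, union_empty]
    rw [hvol1, zero_add]
  · simp [hxB, hyB]

private lemma X_meas (μ : ℝ) (i : ℕ) :
    Measurable (fun z : (ℝ×ℝ)×ℝ => z.1.1 + (z.1.2 - z.1.1) *
      (((⌊((i:ℝ)+1) * ((μ - z.1.1)/(z.1.2 - z.1.1)) + z.2⌋ : ℤ) : ℝ)
        - ((⌊(i:ℝ) * ((μ - z.1.1)/(z.1.2 - z.1.1)) + z.2⌋ : ℤ) : ℝ))) := by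
  have hx : Measurable fun z : (ℝ×ℝ)×ℝ => z.1.1 := measurable_fst.fst
  have hy : Measurable fun z : (ℝ×ℝ)×ℝ => z.1.2 := measurable_fst.snd
  have hq : Measurable fun z : (ℝ×ℝ)×ℝ => (μ - z.1.1)/(z.1.2 - z.1.1) :=
    (measurable_const.sub hx).div (hy.sub hx)
  have hfl : ∀ c : ℝ, Measurable fun z : (ℝ×ℝ)×ℝ =>
      ((⌊c * ((μ - z.1.1)/(z.1.2 - z.1.1)) + z.2⌋ : ℤ) : ℝ) := by
    intro c
    exact measurable_from_top.comp (Measurable.floor ((measurable_const.mul hq).add measurable_snd))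
  exact hx.add ((hy.sub hx).mul ((hfl _).sub (hfl _)))

private lemma key_eq
    (ν : MeasureTheory.Measure ℝ) [IsProbabilityMeasure ν] (μ : ℝ)
    (mR : ℝ) (hmRpos : 0 < mR)
    (hmL : ∫⁻ x, ENNReal.ofReal (μ - x) ∂(ν.restrict (Iio μ)) = ENNReal.ofReal mR)
    (hpL : ∫⁻ x, ENNReal.ofReal (x - μ) ∂(ν.restrict (Ioi μ)) = ENNReal.ofReal mR)
    (i : ℕ) (B : Set ℝ) (hB : MeasurableSet B) :
    ((ν {μ} • Measure.dirac ((μ,μ) : ℝ×ℝ)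
      + ((ν.restrict (Iio μ)).prod (ν.restrict (Ioi μ))).withDensity
          (fun z => ENNReal.ofReal ((z.2 - z.1) / mR))).prod
        (volume.restrict (Ico (0:ℝ) 1)))
      ((fun z : (ℝ×ℝ)×ℝ => z.1.1 + (z.1.2 - z.1.1) *
          (((⌊((i:ℝ)+1) * ((μ - z.1.1)/(z.1.2 - z.1.1)) + z.2⌋ : ℤ) : ℝ)
            - ((⌊(i:ℝ) * ((μ - z.1.1)/(z.1.2 - z.1.1)) + z.2⌋ : ℤ) : ℝ))) ⁻¹' B) = ν B := by
  haveI := lam_finite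
  set lam := volume.restrict (Ico (0:ℝ) 1) with hlam
  set νm := ν.restrict (Iio μ) with hνm
  set νp := ν.restrict (Ioi μ) with hνp
  set dens : ℝ × ℝ → ENNReal := fun z => ENNReal.ofReal ((z.2 - z.1) / mR) with hdens
  have hdensm : Measurable dens :=
    ((measurable_snd.sub measurable_fst).div_const mR).ennreal_ofReal
  set Xi : (ℝ×ℝ)×ℝ → ℝ := fun z => z.1.1 + (z.1.2 - z.1.1) *
      (((⌊((i:ℝ)+1) * ((μ - z.1.1)/(z.1.2 - z.1.1)) + z.2⌋ : ℤ) : ℝ)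
        - ((⌊(i:ℝ) * ((μ - z.1.1)/(z.1.2 - z.1.1)) + z.2⌋ : ℤ) : ℝ)) with hXi
  have hXm : Measurable Xi := X_meas μ i
  have hpre : MeasurableSet (Xi ⁻¹' B) := hXm hB
  set sl : ℝ×ℝ → ENNReal := fun z => lam (Prod.mk z ⁻¹' (Xi ⁻¹' B)) with hsl
  have hslm : Measurable sl := measurable_measure_prodMk_left hpre
  rw [Measure.prod_apply hpre]
  rw [lintegral_add_measure, lintegral_smul_measure, lintegral_dirac' _ hslm]
  have hatom : ν {μ} * sl (μ, μ) = ν (B ∩ {μ}) := by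
    have hXμ : ∀ ω : ℝ, Xi ((μ, μ), ω) = μ := by
      intro ω; simp [hXi]
    have hset : (Prod.mk ((μ,μ):ℝ×ℝ) ⁻¹' (Xi ⁻¹' B)) = {ω : ℝ | μ ∈ B} := by
      ext ω; simp [hXμ ω]
    by_cases hμB : μ ∈ B
    · have : sl (μ, μ) = 1 := by
        rw [hsl]; simp only [hset]
        have : {ω : ℝ | μ ∈ B} = univ := by ext; simp [hμB]
        rw [this, hlam, Measure.restrict_apply MeasurableSet.univ]
        simp [Real.volume_Ico]
      rw [this, mul_one]
      congr 1
      ext x; simp only [mem_inter_iff, mem_singleton_iff]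
      constructor
      · rintro rfl; exact ⟨hμB, rfl⟩
      · rintro ⟨_, rfl⟩; rfl
    · have h1 : sl (μ, μ) = 0 := by
        rw [hsl]; simp only [hset]
        have : {ω : ℝ | μ ∈ B} = ∅ := by ext; simp [hμB]
        rw [this]; simp
      have h2 : B ∩ {μ} = ∅ := by
        ext x; simp only [mem_inter_iff, mem_singleton_iff, mem_empty_iff_false, iff_false]
        rintro ⟨hx, rfl⟩; exact hμB hx
      rw [h1, mul_zero, h2, measure_empty]
  rw [smul_eq_mul, hatom]
  rw [lintegral_withDensity_eq_lintegral_mul _ hdensm hslm]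
  have hEc : (νm.prod νp) ((Iio μ ×ˢ Ioi μ)ᶜ) = 0 := by
    rw [Set.compl_prod_eq_union]
    refine measure_union_null ?_ ?_
    · rw [Measure.prod_prod]
      have : νm ((Iio μ)ᶜ) = 0 := by
        rw [hνm, Measure.restrict_apply measurableSet_Iio.compl, compl_inter_self]
        exact measure_empty
      rw [this, zero_mul]
    · rw [Measure.prod_prod]
      have : νp ((Ioi μ)ᶜ) = 0 := by
        rw [hνp, Measure.restrict_apply measurableSet_Ioi.compl, compl_inter_self]
        exact measure_empty
      rw [this, mul_zero]
  have hae : ∀ᵐ z ∂(νm.prod νp), z ∈ (Iio μ ×ˢ Ioi μ : Set (ℝ × ℝ)) := by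
    rw [ae_iff]
    exact measure_mono_null (fun z hz => hz) hEc
  set g : ℝ × ℝ → ENNReal := fun z =>
      ((if z.1 ∈ B then ENNReal.ofReal (z.2 - μ) else 0)
        + (if z.2 ∈ B then ENNReal.ofReal (μ - z.1) else 0)) * (ENNReal.ofReal mR)⁻¹ with hg
  have hcongr : ∫⁻ z, (dens * sl) z ∂(νm.prod νp) = ∫⁻ z, g z ∂(νm.prod νp) := by
    refine lintegral_congr_ae ?_
    filter_upwards [hae] with z hz
    obtain ⟨hz1, hz2⟩ := hz
    have hz1' : z.1 < μ := hz1
    have hz2' : μ < z.2 := hz2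
    have hyx : (0:ℝ) < z.2 - z.1 := by linarith
    have hslz : sl z = (if z.1 ∈ B then ENNReal.ofReal (1 - (μ - z.1)/(z.2 - z.1)) else 0)
        + (if z.2 ∈ B then ENNReal.ofReal ((μ - z.1)/(z.2 - z.1)) else 0) := by
      rw [hsl, hlam]
      exact slice_eq μ z.1 z.2 i B hB hz1' hz2'
    have hdz : dens z = ENNReal.ofReal (z.2 - z.1) * (ENNReal.ofReal mR)⁻¹ := by
      show ENNReal.ofReal ((z.2 - z.1) / mR) = _
      rw [ENNReal.ofReal_div_of_pos hmRpos, div_eq_mul_inv]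
    have h1 : ENNReal.ofReal (z.2 - z.1) * ENNReal.ofReal (1 - (μ - z.1)/(z.2 - z.1))
        = ENNReal.ofReal (z.2 - μ) := by
      rw [← ENNReal.ofReal_mul hyx.le]
      congr 1
      field_simp
      ring
    have h2 : ENNReal.ofReal (z.2 - z.1) * ENNReal.ofReal ((μ - z.1)/(z.2 - z.1))
        = ENNReal.ofReal (μ - z.1) := by
      rw [← ENNReal.ofReal_mul hyx.le]
      congr 1
      field_simp
    show dens z * sl z = g z
    have hgz : g z = ((if z.1 ∈ B then ENNReal.ofReal (z.2 - μ) else 0)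
        + if z.2 ∈ B then ENNReal.ofReal (μ - z.1) else 0) * (ENNReal.ofReal mR)⁻¹ := rfl
    rw [hslz, hdz, hgz, mul_right_comm]
    congr 1
    simp only [mul_add, mul_ite, mul_zero, h1, h2]
  rw [hcongr]
  have hn1m : Measurable fun z : ℝ × ℝ => (if z.1 ∈ B then ENNReal.ofReal (z.2 - μ) else 0) := by
    refine Measurable.ite ?_ ((measurable_snd.sub measurable_const).ennreal_ofReal) measurable_const
    exact measurable_fst hB
  have hn2m : Measurable fun z : ℝ × ℝ => (if z.2 ∈ B then ENNReal.ofReal (μ - z.1) else 0) := by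
    refine Measurable.ite ?_ ((measurable_const.sub measurable_fst).ennreal_ofReal) measurable_const
    exact measurable_snd hB
  have hgint : ∫⁻ z, g z ∂(νm.prod νp)
      = ENNReal.ofReal mR * (νm B + νp B) * (ENNReal.ofReal mR)⁻¹ := by
    rw [hg]
    beta_reduce
    rw [lintegral_mul_const _ (by exact hn1m.add hn2m)]
    congr 1
    rw [lintegral_add_left hn1m]
    have hT1 : ∫⁻ z, (if z.1 ∈ B then ENNReal.ofReal (z.2 - μ) else 0) ∂(νm.prod νp)
        = ENNReal.ofReal mR * νm B := by
      rw [lintegral_prod _ hn1m.aemeasurable]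
      have hinner : ∀ x : ℝ, ∫⁻ y, (if x ∈ B then ENNReal.ofReal (y - μ) else 0) ∂νp
          = if x ∈ B then ENNReal.ofReal mR else 0 := by
        intro x
        by_cases hx : x ∈ B
        · simp only [hx, if_true]; exact hpL
        · simp [hx]
      simp_rw [hinner]
      have : ∀ x : ℝ, (if x ∈ B then ENNReal.ofReal mR else 0)
          = B.indicator (fun _ => ENNReal.ofReal mR) x := by
        intro x; rw [indicator_apply]
      simp_rw [this]
      rw [lintegral_indicator_const hB]
    have hT2 : ∫⁻ z, (if z.2 ∈ B then ENNReal.ofReal (μ - z.1) else 0) ∂(νm.prod νp)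
        = ENNReal.ofReal mR * νp B := by
      rw [lintegral_prod _ hn2m.aemeasurable]
      have hinner : ∀ x : ℝ, ∫⁻ y, (if y ∈ B then ENNReal.ofReal (μ - x) else 0) ∂νp
          = ENNReal.ofReal (μ - x) * νp B := by
        intro x
        have : ∀ y : ℝ, (if y ∈ B then ENNReal.ofReal (μ - x) else 0)
            = B.indicator (fun _ => ENNReal.ofReal (μ - x)) y := by
          intro y; rw [indicator_apply]
        simp_rw [this]
        rw [lintegral_indicator_const hB]
      simp_rw [hinner]
      have hmf : Measurable fun x : ℝ => ENNReal.ofReal (μ - x) :=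
        (measurable_const.sub measurable_id).ennreal_ofReal
      rw [lintegral_mul_const _ hmf, hmL]
    rw [hT1, hT2, mul_add]
  rw [hgint]
  have hcancel : ENNReal.ofReal mR * (νm B + νp B) * (ENNReal.ofReal mR)⁻¹ = νm B + νp B := by
    rw [mul_comm (ENNReal.ofReal mR) (νm B + νp B), mul_assoc,
      ENNReal.mul_inv_cancel (ne_of_gt (ENNReal.ofReal_pos.mpr hmRpos)) ENNReal.ofReal_ne_top,
      mul_one]
  rw [hcancel]
  have hmB : νm B = ν (B ∩ Iio μ) := by rw [hνm, Measure.restrict_apply hB]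
  have hpB : νp B = ν (B ∩ Ioi μ) := by rw [hνp, Measure.restrict_apply hB]
  rw [hmB, hpB]
  have h1 := measure_inter_add_diff (μ := ν) B measurableSet_Iio (t := Iio μ)
  have h2 : B \ Iio μ = B ∩ Ici μ := by
    ext x; simp [diff_eq, not_lt]
  have h3 := measure_inter_add_diff (μ := ν) (B ∩ Ici μ) (measurableSet_singleton μ)
  have h4 : (B ∩ Ici μ) ∩ {μ} = B ∩ {μ} := by
    ext x
    simp only [mem_inter_iff, mem_singleton_iff, mem_Ici]
    constructor
    · rintro ⟨⟨hx, _⟩, rfl⟩; exact ⟨hx, rfl⟩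
    · rintro ⟨hx, rfl⟩; exact ⟨⟨hx, le_refl _⟩, rfl⟩
  have h5 : (B ∩ Ici μ) \ {μ} = B ∩ Ioi μ := by
    ext x
    simp only [mem_diff, mem_inter_iff, mem_singleton_iff, mem_Ici, mem_Ioi]
    constructor
    · rintro ⟨⟨hx, hge⟩, hne⟩; exact ⟨hx, lt_of_le_of_ne hge (Ne.symm hne)⟩
    · rintro ⟨hx, hlt⟩; exact ⟨⟨hx, le_of_lt hlt⟩, ne_of_gt hlt⟩
  rw [h2] at h1
  rw [h4, h5] at h3
  calc ν (B ∩ {μ}) + (ν (B ∩ Iio μ) + ν (B ∩ Ioi μ))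
      = ν (B ∩ Iio μ) + (ν (B ∩ {μ}) + ν (B ∩ Ioi μ)) := by ring
    _ = ν (B ∩ Iio μ) + ν (B ∩ Ici μ) := by rw [h3]
    _ = ν B := h1

private lemma sum_bound (μ a b x y ω : ℝ) (n : ℕ) (hax : a ≤ x) (hxμ : x < μ) (hμy : μ < y)
    (hyb : y ≤ b) (hω0 : 0 ≤ ω) (hω1 : ω < 1) :
    |(∑ i ∈ Finset.range n, (x + (y - x) *
        (((⌊((i:ℝ)+1) * ((μ - x)/(y - x)) + ω⌋ : ℤ) : ℝ)
          - ((⌊(i:ℝ) * ((μ - x)/(y - x)) + ω⌋ : ℤ) : ℝ)))) - (n:ℝ) * μ| ≤ b - a := by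
  have hyx : (0:ℝ) < y - x := by linarith
  set q : ℝ := (μ - x)/(y - x) with hq
  have hqyx : (y - x) * q = μ - x := by
    rw [hq]; field_simp
  set f : ℕ → ℝ := fun i => ((⌊(i:ℝ) * q + ω⌋ : ℤ) : ℝ) with hf
  have hterm : ∀ i : ℕ, x + (y - x) * (((⌊((i:ℝ)+1) * q + ω⌋ : ℤ) : ℝ)
      - ((⌊(i:ℝ) * q + ω⌋ : ℤ) : ℝ)) = x + (y - x) * (f (i+1) - f i) := by
    intro i
    rw [hf]
    push_cast
    ring_nf
  have hsum : (∑ i ∈ Finset.range n, (x + (y - x) *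
      (((⌊((i:ℝ)+1) * q + ω⌋ : ℤ) : ℝ) - ((⌊(i:ℝ) * q + ω⌋ : ℤ) : ℝ))))
      = n * x + (y - x) * (f n - f 0) := by
    simp_rw [hterm]
    rw [Finset.sum_add_distrib, Finset.sum_const, Finset.card_range, ← Finset.mul_sum,
      Finset.sum_range_sub f]
    simp [nsmul_eq_mul]
  have hf0 : f 0 = 0 := by
    rw [hf]
    norm_num
    exact ⟨hω0, hω1⟩
  rw [hsum, hf0, sub_zero]
  set t : ℝ := (n:ℝ) * q with ht
  have hfn : f n = ((⌊t + ω⌋ : ℤ) : ℝ) := rfl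
  have hfloor_le : ((⌊t + ω⌋ : ℤ) : ℝ) ≤ t + ω := Int.floor_le _
  have hfloor_gt : t + ω - 1 < ((⌊t + ω⌋ : ℤ) : ℝ) := Int.sub_one_lt_floor _
  have habs : |f n - t| ≤ 1 := by
    rw [hfn]
    rw [abs_le]
    constructor <;> linarith
  have hkey : (n:ℝ) * x + (y - x) * f n - (n:ℝ) * μ = (y - x) * (f n - t) := by
    have : (y - x) * t = (n:ℝ) * (μ - x) := by
      rw [ht]; rw [mul_comm ((n:ℝ)) q, ← mul_assoc, hqyx]; ring
    nlinarith [this]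
  rw [hkey, abs_mul, abs_of_pos hyx]
  calc (y - x) * |f n - t| ≤ (y - x) * 1 := by
        exact mul_le_mul_of_nonneg_left habs hyx.le
    _ = y - x := mul_one _
    _ ≤ b - a := by linarith

end mainConstruction

/-- **Corollary 2.1 (a).** If the support of `F` is contained in `[a,b]`, `a < b`, and `F`
has mean `μ`, then there exist random variables `X₁, X₂, …` each distributed as `F` such
that for every `n`, `|S_n − nμ| ≤ b − a` almost surely. -/
theorem bounded_support_sum_control
    (ν : Measure ℝ) [IsProbabilityMeasure ν] (a b μ : ℝ) (hab : a < b)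
    (hsupp : ν (Icc a b)ᶜ = 0) (hμ : μ = ∫ x, x ∂ν) :
    ∃ (Ω : Type) (mΩ : MeasurableSpace Ω) (P : Measure Ω) (X : ℕ → Ω → ℝ),
      IsProbabilityMeasure P ∧
      (∀ i, Measure.map (X i) P = ν) ∧
      ∀ n : ℕ, ∀ᵐ ω ∂P, |(∑ i ∈ Finset.range n, X i ω) - (n : ℝ) * μ| ≤ b - a := by
  classical
  have haeab : ∀ᵐ x ∂ν, x ∈ Icc a b := by
    rw [ae_iff]
    convert hsupp using 2
    ext x; simp
  have hint : Integrable (fun x => x) ν := by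
    refine (integrable_const (max |a| |b|)).mono' aemeasurable_id'.aestronglyMeasurable ?_
    filter_upwards [haeab] with x hx
    rw [Real.norm_eq_abs]
    exact abs_le_max_abs_abs hx.1 hx.2
  have hsub : Integrable (fun x => x - μ) ν := hint.sub (integrable_const μ)
  have hmean : ∫ x, (x - μ) ∂ν = 0 := by
    rw [integral_sub hint (integrable_const _), integral_const]
    simp [← hμ]
  by_cases hdeg : ν (Iio μ) = 0
  · -- degenerate case : ν = δ_μ
    have hae : ∀ᵐ x ∂ν, 0 ≤ x - μ := by
      rw [ae_iff]
      convert hdeg using 2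
      ext x
      simp only [mem_setOf_eq, not_le, mem_Iio]
      constructor <;> intro h <;> linarith
    have hzero : (fun x => x - μ) =ᵐ[ν] 0 :=
      (integral_eq_zero_iff_of_nonneg_ae hae hsub).mp hmean
    have hc : ν ({μ}ᶜ) = 0 := by
      have h0 : ∀ᵐ x ∂ν, x = μ := by
        filter_upwards [hzero] with x hx
        simpa [sub_eq_zero] using hx
      rw [ae_iff] at h0
      convert h0 using 2
      ext x; simp
    have hν1 : ν {μ} = 1 := (prob_compl_eq_zero_iff (measurableSet_singleton μ)).mp hc
    have hδ : ν = Measure.dirac μ := by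
      ext s hs
      rw [Measure.dirac_apply' _ hs]
      by_cases hμs : μ ∈ s
      · have hle : ν {μ} ≤ ν s := measure_mono (by simpa using hμs)
        simp only [indicator, hμs, if_true, Pi.one_apply]
        exact le_antisymm prob_le_one (hν1 ▸ hle)
      · have hsub2 : s ⊆ {μ}ᶜ := fun x hx => by
          simp only [mem_compl_iff, mem_singleton_iff]
          rintro rfl; exact hμs hx
        simp only [indicator, hμs, if_false]
        exact measure_mono_null hsub2 hc
    refine ⟨ℝ, inferInstance, Measure.dirac μ, fun _ _ => μ, ?_, ?_, ?_⟩
    · rw [← hδ]; infer_instance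
    · intro i
      rw [Measure.map_const]
      rw [hδ]
      simp
    · intro n
      refine ae_of_all _ fun ω => ?_
      rw [Finset.sum_const, Finset.card_range, nsmul_eq_mul, sub_self, abs_zero]
      linarith
  · -- main case
    have hsplit : ∫ x in Iio μ, (x - μ) ∂ν + ∫ x in Ici μ, (x - μ) ∂ν = 0 := by
      rw [intervalIntegral.integral_Iio_add_Ici hsub.integrableOn hsub.integrableOn]
      exact hmean
    have hIci : ∫ x in Ici μ, (x - μ) ∂ν = ∫ x in Ioi μ, (x - μ) ∂ν := by
      have hu : Ici μ = {μ} ∪ Ioi μ := by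
        ext x; simp [le_iff_lt_or_eq, or_comm, eq_comm]
      rw [hu, setIntegral_union (by simp [Set.disjoint_left]) measurableSet_Ioi
        hsub.integrableOn hsub.integrableOn]
      have h1 : ∫ x in ({μ} : Set ℝ), (x - μ) ∂ν = 0 := by
        rw [setIntegral_congr_fun (measurableSet_singleton μ) (g := fun _ => (0:ℝ))
          (fun x hx => by simp at hx; simp [hx])]
        simp
      rw [h1, zero_add]
    have hmmeq : ∫ x in Iio μ, (μ - x) ∂ν = ∫ x in Ioi μ, (x - μ) ∂ν := by
      have hneg : ∫ x in Iio μ, (μ - x) ∂ν = - ∫ x in Iio μ, (x - μ) ∂ν := by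
        rw [← integral_neg]
        congr 1; ext x; ring
      rw [hneg]; linarith [hsplit, hIci]
    set mR := ∫ x in Ioi μ, (x - μ) ∂ν with hmRdef
    have hnonneg_m : 0 ≤ᵐ[ν.restrict (Iio μ)] fun x => μ - x := by
      filter_upwards [ae_restrict_mem measurableSet_Iio] with x hx
      simp at hx ⊢; linarith
    have hnonneg_p : 0 ≤ᵐ[ν.restrict (Ioi μ)] fun x => x - μ := by
      filter_upwards [ae_restrict_mem measurableSet_Ioi] with x hx
      simp at hx ⊢; linarith
    have hintm : Integrable (fun x => μ - x) (ν.restrict (Iio μ)) :=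
      (integrable_const μ).sub hint.restrict
    have hintp : Integrable (fun x => x - μ) (ν.restrict (Ioi μ)) := hsub.restrict
    have hmL : ∫⁻ x, ENNReal.ofReal (μ - x) ∂(ν.restrict (Iio μ)) = ENNReal.ofReal mR := by
      rw [← ofReal_integral_eq_lintegral_ofReal hintm hnonneg_m]
      exact congrArg ENNReal.ofReal hmmeq
    have hpL : ∫⁻ x, ENNReal.ofReal (x - μ) ∂(ν.restrict (Ioi μ)) = ENNReal.ofReal mR := by
      rw [← ofReal_integral_eq_lintegral_ofReal hintp hnonneg_p]
    have hmRpos : 0 < mR := by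
      have hpos : 0 < ∫⁻ x, ENNReal.ofReal (μ - x) ∂(ν.restrict (Iio μ)) := by
        rw [lintegral_pos_iff_support (by fun_prop)]
        have hsupeq : (Function.support fun x => ENNReal.ofReal (μ - x)) = Iio μ := by
          ext x
          simp [Function.support, ENNReal.ofReal_pos, sub_pos]
        rw [hsupeq, Measure.restrict_apply_self]
        exact pos_iff_ne_zero.mpr hdeg
      rw [hmL] at hpos
      exact ENNReal.ofReal_pos.mp hpos
    -- the construction
    set P : Measure ((ℝ × ℝ) × ℝ) :=
      ((ν {μ} • Measure.dirac ((μ,μ) : ℝ×ℝ)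
        + ((ν.restrict (Iio μ)).prod (ν.restrict (Ioi μ))).withDensity
            (fun z => ENNReal.ofReal ((z.2 - z.1) / mR))).prod
          (volume.restrict (Ico (0:ℝ) 1))) with hP
    set X : ℕ → (ℝ×ℝ)×ℝ → ℝ := fun i z => z.1.1 + (z.1.2 - z.1.1) *
        (((⌊((i:ℝ)+1) * ((μ - z.1.1)/(z.1.2 - z.1.1)) + z.2⌋ : ℤ) : ℝ)
          - ((⌊(i:ℝ) * ((μ - z.1.1)/(z.1.2 - z.1.1)) + z.2⌋ : ℤ) : ℝ)) with hX
    have hkey : ∀ (i : ℕ) (B : Set ℝ), MeasurableSet B → P (X i ⁻¹' B) = ν B := by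
      intro i B hB
      exact key_eq ν μ mR hmRpos hmL hpL i B hB
    haveI hPprob : IsProbabilityMeasure P := by
      constructor
      have h2 := hkey 0 univ MeasurableSet.univ
      rw [preimage_univ] at h2
      rw [h2]
      exact measure_univ
    refine ⟨(ℝ × ℝ) × ℝ, inferInstance, P, X, hPprob, ?_, ?_⟩
    · intro i
      refine Measure.ext fun B hB => ?_
      rw [Measure.map_apply (X_meas μ i) hB]
      exact hkey i B hB
    · intro n
      rw [ae_iff]
      set A : Set (ℝ×ℝ) := insert ((μ,μ) : ℝ × ℝ) ((Ico a μ) ×ˢ (Ioc μ b)) with hA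
      have hAm : MeasurableSet A :=
        (measurableSet_Ico.prod measurableSet_Ioc).insert _
      have hνmI : (ν.restrict (Iio μ)) ((Ico a μ)ᶜ) = 0 := by
        rw [Measure.restrict_apply measurableSet_Ico.compl]
        refine measure_mono_null ?_ hsupp
        rintro x ⟨hx1, hx2⟩
        simp only [mem_compl_iff, mem_Ico, not_and_or, not_le, not_lt] at hx1
        simp only [mem_Iio] at hx2
        simp only [mem_compl_iff, mem_Icc, not_and_or, not_le]
        rcases hx1 with h | h
        · exact Or.inl h
        · exact absurd hx2 (not_lt.mpr h)
      have hνpI : (ν.restrict (Ioi μ)) ((Ioc μ b)ᶜ) = 0 := by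
        rw [Measure.restrict_apply measurableSet_Ioc.compl]
        refine measure_mono_null ?_ hsupp
        rintro x ⟨hx1, hx2⟩
        simp only [mem_compl_iff, mem_Ioc, not_and_or, not_le, not_lt] at hx1
        simp only [mem_Ioi] at hx2
        simp only [mem_compl_iff, mem_Icc, not_and_or, not_le]
        rcases hx1 with h | h
        · exact absurd hx2 (not_lt.mpr h)
        · exact Or.inr h
      have hprodnull : (((ν.restrict (Iio μ)).prod (ν.restrict (Ioi μ))))
          (((Ico a μ) ×ˢ (Ioc μ b))ᶜ) = 0 := by
        rw [Set.compl_prod_eq_union]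
        refine measure_union_null ?_ ?_
        · rw [Measure.prod_prod, hνmI, zero_mul]
        · rw [Measure.prod_prod, hνpI, mul_zero]
      have hΘAc : (ν {μ} • Measure.dirac ((μ,μ) : ℝ×ℝ)
          + ((ν.restrict (Iio μ)).prod (ν.restrict (Ioi μ))).withDensity
              (fun z => ENNReal.ofReal ((z.2 - z.1) / mR))) (Aᶜ) = 0 := by
        rw [Measure.add_apply, Measure.smul_apply]
        have hd : (Measure.dirac ((μ,μ) : ℝ×ℝ)) Aᶜ = 0 := by
          rw [Measure.dirac_apply' _ hAm.compl]
          have hmem : ((μ,μ) : ℝ×ℝ) ∉ Aᶜ := fun h => h (mem_insert _ _)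
          rw [Set.indicator_of_notMem hmem]
        have hw : (((ν.restrict (Iio μ)).prod (ν.restrict (Ioi μ))).withDensity
            (fun z => ENNReal.ofReal ((z.2 - z.1) / mR))) Aᶜ = 0 := by
          refine withDensity_absolutelyContinuous _ _ ?_
          exact measure_mono_null (compl_subset_compl.mpr (subset_insert _ _)) hprodnull
        rw [hd, hw, smul_zero, add_zero]
      have hGnull : P ((A ×ˢ (Ico (0:ℝ) 1))ᶜ) = 0 := by
        rw [hP, Set.compl_prod_eq_union]
        refine measure_union_null ?_ ?_
        · rw [Measure.prod_prod, hΘAc, zero_mul]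
        · rw [Measure.prod_prod]
          have hlc : (volume.restrict (Ico (0:ℝ) 1)) ((Ico (0:ℝ) 1)ᶜ) = 0 := by
            rw [Measure.restrict_apply measurableSet_Ico.compl, compl_inter_self]
            exact measure_empty
          rw [hlc, mul_zero]
      refine measure_mono_null ?_ hGnull
      intro z hz
      simp only [mem_setOf_eq] at hz
      rw [mem_compl_iff]
      intro hzG
      apply hz
      obtain ⟨hzA, hω0, hω1⟩ := hzG
      rcases mem_insert_iff.mp hzA with heq | hmem
      · have hXconst : ∀ i ∈ Finset.range n, X i z = μ := by
          intro i _
          have h1 : z.1.1 = μ := by rw [heq]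
          have h2 : z.1.2 = μ := by rw [heq]
          rw [hX]
          simp only [h1, h2, sub_self, zero_mul, add_zero]
        rw [Finset.sum_congr rfl hXconst, Finset.sum_const, Finset.card_range,
          nsmul_eq_mul, sub_self, abs_zero]
        linarith
      · obtain ⟨⟨hax, hxμ⟩, hμy, hyb⟩ := hmem
        exact sum_bound μ a b z.1.1 z.1.2 z.2 n hax hxμ hμy hyb hω0 hω1
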